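/- Let H : ℝ^d → ℝ be a C² integrable Hamiltonian with ‖d²H(p)‖ ≤ C for all p, and let R = (R^t)_{t≥0} be a variational operator for H. Let F be a family of C² equi-Lipschitz functions on ℝ^d whose second derivatives are bounded by B, such that u(q) = min_{f∈F} f(q) is attained for every q, and such that for every q ∈ ℝ^d and every p ∈ ∂u(q) there exists f ∈ F with f(q) = u(q) and df(q) = p. For each f ∈ F let u_f : [0,T] × ℝ^d → ℝ be a C² solution of ∂ₜu_f + H(∂_q u_f) = 0 with u_f(0,·) = f, where 0 < T ≤ 1/(BC). Then for all 0 ≤ t ≤ T and q ∈ ℝ^d, R^t u(q) = min_{f∈F} u_f(t,q). -/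

import Mathlib

set_option maxHeartbeats 1000000


open Filter Topology Set

noncomputable section

/-- `ℝ^d` with the euclidean structure. -/
abbrev Ed (d : ℕ) := EuclideanSpace ℝ (Fin d)

/-- The Clarke derivative of a Lipschitz function `u : ℝ^d → ℝ` at `q`. -/
def clarke {d : ℕ} (u : Ed d → ℝ) (q : Ed d) : Set (Ed d) :=
  convexHull ℝ {p | ∃ qn : ℕ → Ed d,
    (∀ n, DifferentiableAt ℝ u (qn n)) ∧
    Tendsto qn atTop (𝓝 q) ∧
    Tendsto (fun n => gradient u (qn n)) atTop (𝓝 p)}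

/-- A variational operator for an integrable Hamiltonian `H`. -/
def IsVariationalOperator {d : ℕ} (H : Ed d → ℝ) (R : ℝ → (Ed d → ℝ) → Ed d → ℝ) : Prop :=
  (∀ t : ℝ, 0 ≤ t → ∀ u : Ed d → ℝ, (∃ K, LipschitzWith K u) →
      ∃ K, LipschitzWith K (R t u)) ∧
  (∀ t : ℝ, 0 ≤ t → ∀ u v : Ed d → ℝ, (∃ K, LipschitzWith K u) →
      (∃ K, LipschitzWith K v) → (∀ q, u q ≤ v q) → ∀ q, R t u q ≤ R t v q) ∧
  (∀ t : ℝ, 0 ≤ t → ∀ u : Ed d → ℝ, (∃ K, LipschitzWith K u) → ∀ c : ℝ, ∀ q,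
      R t (fun x => c + u x) q = c + R t u q) ∧
  (∀ t : ℝ, 0 ≤ t → ∀ u : Ed d → ℝ, (∃ K, LipschitzWith K u) → ∀ q : Ed d,
      ∃ q₀ p₀ : Ed d, p₀ ∈ clarke u q₀ ∧ q = q₀ + t • gradient H p₀ ∧
        R t u q = u q₀ + t * ((inner ℝ p₀ (gradient H p₀) : ℝ) - H p₀))

noncomputable def dI (d : ℕ) : StrongDual ℝ (Ed d) →L[ℝ] Ed d :=
  { toLinearMap :=
    { toFun := (InnerProductSpace.toDual ℝ (Ed d)).symm
      map_add' := fun x y => map_add _ x y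
      map_smul' := fun c x => by
        simpa [starRingEnd_apply] using
          (InnerProductSpace.toDual ℝ (Ed d)).symm.map_smulₛₗ c x }
    cont := (InnerProductSpace.toDual ℝ (Ed d)).symm.continuous }

lemma inner_dI {d : ℕ} (ℓ : StrongDual ℝ (Ed d)) (z : Ed d) :
    (inner ℝ (dI d ℓ) z : ℝ) = ℓ z := InnerProductSpace.toDual_symm_apply

lemma norm_dI_sub {d : ℕ} (ℓ ℓ' : StrongDual ℝ (Ed d)) :
    ‖dI d ℓ - dI d ℓ'‖ = ‖ℓ - ℓ'‖ := by
  rw [← map_sub]; exact (InnerProductSpace.toDual ℝ (Ed d)).symm.norm_map _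

lemma gradient_eq_dI {d : ℕ} (g : Ed d → ℝ) (x : Ed d) :
    gradient g x = dI d (fderiv ℝ g x) := rfl

lemma char_lemma {d : ℕ} (H : Ed d → ℝ) (hH : ContDiff ℝ 2 H)
    (T : ℝ) (hT : 0 ≤ T) (f : Ed d → ℝ)
    (w : ℝ × Ed d → ℝ) (hw : ContDiff ℝ 2 w)
    (hpde : ∀ x : ℝ × Ed d, x.1 ∈ Set.Icc 0 T →
      deriv (fun s => w (s, x.2)) x.1 + H (gradient (fun q => w (x.1, q)) x.2) = 0)
    (h0 : ∀ q, w (0, q) = f q)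
    (q₀ : Ed d) (t : ℝ) (ht : t ∈ Set.Icc 0 T) :
    w (t, q₀ + t • gradient H (gradient f q₀))
      = f q₀ + t * ((inner ℝ (gradient f q₀) (gradient H (gradient f q₀)) : ℝ)
          - H (gradient f q₀)) := by
  classical
  set ι : Ed d →L[ℝ] ℝ × Ed d := ContinuousLinearMap.inr ℝ ℝ (Ed d) with hι
  set e1 : ℝ × Ed d := ((1:ℝ), (0 : Ed d)) with he1
  set D : ℝ × Ed d → (ℝ × Ed d →L[ℝ] ℝ) := fderiv ℝ w with hD
  have hD1 : ContDiff ℝ 1 D := hw.fderiv_right (by norm_num)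
  have hDd : ∀ x, HasFDerivAt w (D x) x :=
    fun x => (hw.differentiable (by norm_num) x).hasFDerivAt
  set D2 : ℝ × Ed d → (ℝ × Ed d →L[ℝ] (ℝ × Ed d) →L[ℝ] ℝ) := fderiv ℝ D with hD2def
  have hD2 : ∀ x, HasFDerivAt D (D2 x) x :=
    fun x => (hD1.differentiable one_ne_zero x).hasFDerivAt
  have hsymm : ∀ x a b, D2 x a b = D2 x b a :=
    fun x => second_derivative_symmetric hDd (hD2 x)
  have hD2cont : Continuous D2 := hD1.continuous_fderiv one_ne_zero
  -- Θ : precomposition with ι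
  set Θ : ((ℝ × Ed d) →L[ℝ] ℝ) →L[ℝ] (Ed d →L[ℝ] ℝ) :=
    (ContinuousLinearMap.compL ℝ (Ed d) (ℝ × Ed d) ℝ).flip ι with hΘ
  have hΘapp : ∀ g : (ℝ × Ed d) →L[ℝ] ℝ, Θ g = g.comp ι := fun g => rfl
  set G : ℝ × Ed d → Ed d := fun x => dI d (Θ (D x)) with hG
  have hG1 : ContDiff ℝ 1 G := (dI d).contDiff.comp (Θ.contDiff.comp hD1)
  set G' : (ℝ × Ed d) → (ℝ × Ed d) →L[ℝ] Ed d :=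
    fun x => ((dI d).comp Θ).comp (D2 x) with hG'
  have hGd : ∀ x, HasFDerivAt G (G' x) x :=
    fun x => (((dI d).comp Θ).hasFDerivAt).comp x (hD2 x)
  -- gradient of partial function vs G
  have hgradq : ∀ x : ℝ × Ed d, gradient (fun q => w (x.1, q)) x.2 = G x := by
    intro x
    have h1 : HasFDerivAt (fun q : Ed d => (x.1, q)) ι x.2 :=
      HasFDerivAt.prodMk (hasFDerivAt_const _ _) (hasFDerivAt_id _)
    have h2 := ((hDd x).comp x.2 (by simpa using h1)).fderiv
    rw [gradient_eq_dI,
      show (fun q => w (x.1, q)) = (w ∘ fun q : Ed d => (x.1, q)) from rfl, h2]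
    rfl
  have hderivt : ∀ x : ℝ × Ed d, deriv (fun s => w (s, x.2)) x.1 = D x e1 := by
    intro x
    have h1 : HasDerivAt (fun s : ℝ => (s, x.2)) e1 x.1 :=
      HasDerivAt.prodMk (hasDerivAt_id x.1) (hasDerivAt_const _ _)
    have := (hDd x).comp_hasDerivAt x.1 (by simpa using h1)
    simpa [Function.comp_def] using this.deriv
  -- restated PDE
  have pde : ∀ x : ℝ × Ed d, x.1 ∈ Set.Icc 0 T → D x e1 + H (G x) = 0 := by
    intro x hx
    have := hpde x hx
    rwa [hderivt x, hgradq x] at this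
  -- differentiate the PDE in the space direction
  have pdeD : ∀ x : ℝ × Ed d, x.1 ∈ Set.Icc 0 T → ∀ z : Ed d,
      D2 x (ι z) e1 + (fderiv ℝ H (G x)) (G' x (ι z)) = 0 := by
    rintro ⟨s, q⟩ hx z
    set Ev : ((ℝ × Ed d) →L[ℝ] ℝ) →L[ℝ] ℝ := ContinuousLinearMap.apply ℝ ℝ e1 with hEv
    have embd : HasFDerivAt (fun q' : Ed d => (s, q')) ι q :=
      HasFDerivAt.prodMk (hasFDerivAt_const _ _) (hasFDerivAt_id _)
    have h1 : HasFDerivAt (fun q' : Ed d => D (s, q') e1)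
        ((Ev.comp (D2 (s, q))).comp ι) q := by
      have := (Ev.hasFDerivAt.comp (s, q) (hD2 (s, q))).comp q embd
      simpa [Function.comp_def, hEv] using this
    have h2 : HasFDerivAt (fun q' : Ed d => H (G (s, q')))
        (((fderiv ℝ H (G (s, q))).comp (G' (s, q))).comp ι) q := by
      have hHd : HasFDerivAt H (fderiv ℝ H (G (s, q))) (G (s, q)) :=
        (hH.differentiable (by norm_num) _).hasFDerivAt
      have := (hHd.comp (s, q) (hGd (s, q))).comp q embd
      simpa [Function.comp_def, ContinuousLinearMap.comp_assoc] using this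
    have hsum : HasFDerivAt (fun q' : Ed d => D (s, q') e1 + H (G (s, q')))
        ((Ev.comp (D2 (s, q))).comp ι
          + ((fderiv ℝ H (G (s, q))).comp (G' (s, q))).comp ι) q := h1.add h2
    have hzero : (fun q' : Ed d => D (s, q') e1 + H (G (s, q'))) = fun _ => (0 : ℝ) := by
      funext q'
      exact pde (s, q') hx
    rw [hzero] at hsum
    have := hsum.unique (hasFDerivAt_const 0 q)
    have happ := congrArg (fun L => L z) this
    simpa [hEv] using happ
  -- fderiv of H via gradient
  have hHgrad : ∀ y z : Ed d, fderiv ℝ H y z = (inner ℝ (gradient H y) z : ℝ) := by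
    intro y z
    rw [gradient_eq_dI, inner_dI]
  -- inner products with G'
  have hG'inner : ∀ x h z, (inner ℝ (G' x h) z : ℝ) = D2 x h (ι z) := by
    intro x h z
    have : G' x h = dI d (Θ (D2 x h)) := rfl
    rw [this, inner_dI, hΘapp]
    rfl
  -- the key identity
  have key : ∀ x : ℝ × Ed d, x.1 ∈ Set.Icc 0 T → ∀ z : Ed d,
      G' x (e1 + ι z) = (G' x).comp ι (z - gradient H (G x)) := by
    intro x hx z
    set g : Ed d := gradient H (G x) with hg
    have main : G' x e1 = - G' x (ι g) := by
      have h0 : ∀ y : Ed d, (inner ℝ (G' x e1 + G' x (ι g)) y : ℝ) = 0 := by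
        intro y
        rw [inner_add_left, hG'inner, hG'inner]
        have e1sym : D2 x e1 (ι y) = D2 x (ι y) e1 := hsymm x e1 (ι y)
        have hpd := pdeD x hx y
        have hfd : fderiv ℝ H (G x) (G' x (ι y)) = (inner ℝ (G' x (ι y)) g : ℝ) := by
          rw [hHgrad]
          exact real_inner_comm _ _
        rw [hfd, hG'inner, hsymm x (ι y) (ι g)] at hpd
        rw [e1sym]
        linarith
      have hv0 : G' x e1 + G' x (ι g) = 0 :=
        inner_self_eq_zero.mp (h0 (G' x e1 + G' x (ι g)))
      exact eq_neg_of_add_eq_zero_left hv0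
    have : (G' x).comp ι (z - g) = G' x (ι z) - G' x (ι g) := by
      rw [show (G' x).comp ι (z - g) = G' x (ι (z - g)) from rfl, map_sub, map_sub]
    rw [map_add, main, this]
    abel
  -- the characteristic curve
  set p₀ : Ed d := gradient f q₀ with hp₀
  set v : Ed d := gradient H p₀ with hv
  set γ : ℝ → ℝ × Ed d := fun s => (s, q₀ + s • v) with hγ
  have hγc : Continuous γ := by
    apply Continuous.prodMk continuous_id
    exact continuous_const.add (continuous_id.smul continuous_const)
  have hγd : ∀ s : ℝ, HasDerivAt γ (e1 + ι v) s := by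
    intro s
    have h1 : HasDerivAt (fun s : ℝ => q₀ + s • v) v s := by
      simpa using ((hasDerivAt_id s).smul_const v).const_add q₀
    have h2 := HasDerivAt.prodMk (hasDerivAt_id s) h1
    convert h2 using 1
    all_goals simp [hγ, he1, hι, Prod.ext_iff]
  set p : ℝ → Ed d := fun s => G (γ s) with hp
  have hpd : ∀ s, HasDerivAt p (G' (γ s) (e1 + ι v)) s :=
    fun s => (hGd (γ s)).comp_hasDerivAt s (hγd s)
  have hp0 : p 0 = p₀ := by
    have hγ0 : γ 0 = (0, q₀) := by simp [hγ]
    have h2 : p 0 = gradient (fun q => w (0, q)) q₀ := by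
      rw [hp]
      simp only [hγ0]
      exact (hgradq (0, q₀)).symm
    have h3 : (fun q => w (0, q)) = f := funext h0
    rw [h2, h3]
  -- compact sets and bounds
  obtain ⟨r, hr⟩ : ∃ r, (p '' Icc 0 T ∪ {p₀}) ⊆ Metric.closedBall 0 r :=
    (((isCompact_Icc).image (hG1.continuous.comp hγc)).union
      isCompact_singleton).isBounded.subset_closedBall 0
  set S : Set (Ed d) := Metric.closedBall 0 r with hS
  have hSconv : Convex ℝ S := convex_closedBall _ _
  have hScomp : IsCompact S := isCompact_closedBall _ _
  have hH1 : ContDiff ℝ 1 (fderiv ℝ H) := hH.fderiv_right (by norm_num)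
  obtain ⟨c₂, hc₂⟩ :=
    hScomp.exists_bound_of_continuousOn ((hH1.continuous_fderiv one_ne_zero).continuousOn)
  set C' : ℝ := max c₂ 0 with hC'
  have hC'0 : 0 ≤ C' := le_max_right _ _
  have hgradHlip : ∀ y₁ ∈ S, ∀ y₂ ∈ S,
      ‖gradient H y₁ - gradient H y₂‖ ≤ C' * ‖y₁ - y₂‖ := by
    intro y₁ h₁ y₂ h₂
    rw [gradient_eq_dI, gradient_eq_dI, norm_dI_sub]
    exact Convex.norm_image_sub_le_of_norm_fderiv_le
      (fun x _ => (hH1.differentiable one_ne_zero x))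
      (fun x hx => le_trans (hc₂ x hx) (le_max_left _ _)) hSconv h₂ h₁
  have hG'cont : Continuous G' := by
    have h := ((ContinuousLinearMap.compL ℝ (ℝ × Ed d) ((ℝ × Ed d) →L[ℝ] ℝ) (Ed d))
      ((dI d).comp Θ)).continuous.comp hD2cont
    exact h
  obtain ⟨m, hm⟩ := (isCompact_Icc (a := (0:ℝ)) (b := T)).exists_bound_of_continuousOn
      ((hG'cont.comp hγc).continuousOn)
  set M : ℝ := max m 0 with hM
  have hM0 : 0 ≤ M := le_max_right _ _
  set cl : ℝ → ℝ := fun s => max 0 (min s T) with hcl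
  have hclmem : ∀ s, cl s ∈ Icc 0 T := fun s =>
    ⟨le_max_left _ _, max_le hT (min_le_right _ _)⟩
  have hcleq : ∀ s ∈ Icc 0 T, cl s = s := by
    intro s hs
    simp [hcl, min_eq_left hs.2, max_eq_right hs.1]
  -- the vector field
  set vf : ℝ → Ed d → Ed d := fun s y => (G' (γ (cl s))).comp ι (v - gradient H y) with hvf
  set K : NNReal := (M * C').toNNReal with hK
  have hlip : ∀ s : ℝ, LipschitzOnWith K (vf s) S := by
    intro s
    rw [lipschitzOnWith_iff_dist_le_mul]
    intro y₁ h₁ y₂ h₂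
    rw [dist_eq_norm, dist_eq_norm]
    have hdiff : vf s y₁ - vf s y₂
        = (G' (γ (cl s))).comp ι (gradient H y₂ - gradient H y₁) := by
      rw [hvf, ← map_sub]
      congr 1
      abel
    have hKcoe : (K : ℝ) = M * C' := Real.coe_toNNReal _ (mul_nonneg hM0 hC'0)
    rw [hdiff, hKcoe]
    have hιz : ∀ z : Ed d, ‖ι z‖ = ‖z‖ := by
      intro z
      simp [hι, Prod.norm_def]
    have h1 : ‖(G' (γ (cl s))).comp ι (gradient H y₂ - gradient H y₁)‖
        ≤ ‖G' (γ (cl s))‖ * ‖gradient H y₂ - gradient H y₁‖ := by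
      have := (G' (γ (cl s))).le_opNorm (ι (gradient H y₂ - gradient H y₁))
      rw [hιz] at this
      exact this
    have h2 : ‖G' (γ (cl s))‖ ≤ M :=
      le_trans (hm (cl s) (hclmem s)) (le_max_left _ _)
    have h3 : ‖gradient H y₂ - gradient H y₁‖ ≤ C' * ‖y₁ - y₂‖ := by
      rw [norm_sub_rev]
      exact hgradHlip y₁ h₁ y₂ h₂
    calc ‖(G' (γ (cl s))).comp ι (gradient H y₂ - gradient H y₁)‖
        ≤ ‖G' (γ (cl s))‖ * ‖gradient H y₂ - gradient H y₁‖ := h1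
      _ ≤ M * (C' * ‖y₁ - y₂‖) := by
          apply mul_le_mul h2 h3 (norm_nonneg _) hM0
      _ = M * C' * ‖y₁ - y₂‖ := by ring
  have hode : ∀ s ∈ Ico 0 T, HasDerivWithinAt p (vf s (p s)) (Ici s) s := by
    intro s hs
    have hsIcc : s ∈ Icc 0 T := ⟨hs.1, hs.2.le⟩
    have h1 := (hpd s).hasDerivWithinAt (s := Ici s)
    have h2 : G' (γ s) (e1 + ι v) = vf s (p s) := by
      have hk := key (γ s) hsIcc v
      rw [hvf]
      simp only [hcleq s hsIcc]
      exact hk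
    rwa [h2] at h1
  have hode0 : ∀ s ∈ Ico 0 T, HasDerivWithinAt (fun _ : ℝ => p₀) (vf s p₀) (Ici s) s := by
    intro s hs
    have h2 : vf s p₀ = 0 := by
      rw [hvf]
      simp [← hv]
    rw [h2]
    exact (hasDerivAt_const s p₀).hasDerivWithinAt
  have hmemp : ∀ s ∈ Ico 0 T, p s ∈ S :=
    fun s hs => hr (Or.inl ⟨s, ⟨hs.1, hs.2.le⟩, rfl⟩)
  have hmem0 : ∀ s ∈ Ico 0 T, p₀ ∈ ((fun _ => S) s) := fun s _ => hr (Or.inr rfl)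
  have hEq : EqOn p (fun _ => p₀) (Icc 0 T) :=
    ODE_solution_unique_of_mem_Icc_right (v := vf) (s := fun _ => S) (fun s _ => hlip s)
      ((hG1.continuous.comp hγc).continuousOn) hode hmemp
      continuousOn_const hode0 hmem0 hp0
  -- integrate along the characteristic
  set c : ℝ := (inner ℝ p₀ v : ℝ) - H p₀ with hc
  have hder : ∀ s ∈ Ico 0 t, HasDerivWithinAt (fun s => w (γ s)) c (Ici s) s := by
    intro s hs
    have hsIcc : s ∈ Icc 0 T := ⟨hs.1, hs.2.le.trans ht.2⟩
    have h1 : HasDerivAt (fun s => w (γ s)) (D (γ s) (e1 + ι v)) s :=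
      (hDd (γ s)).comp_hasDerivAt s (hγd s)
    have h2 : D (γ s) (e1 + ι v) = c := by
      rw [map_add]
      have hpde' : D (γ s) e1 = - H (G (γ s)) := by
        have := pde (γ s) hsIcc
        linarith
      have hiv : D (γ s) (ι v) = (inner ℝ (G (γ s)) v : ℝ) := by
        rw [show G (γ s) = dI d (Θ (D (γ s))) from rfl, inner_dI, hΘapp]
        rfl
      have hps : G (γ s) = p₀ := hEq hsIcc
      rw [hpde', hiv, hps, hc]
      ring
    rw [← h2]
    exact h1.hasDerivWithinAt
  have hlin : ∀ s ∈ Ico 0 t, HasDerivWithinAt (fun s : ℝ => f q₀ + s * c) c (Ici s) s := by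
    intro s _
    simpa using (((hasDerivAt_id s).mul_const c).const_add (f q₀)).hasDerivWithinAt
  have h00 : w (γ 0) = f q₀ + 0 * c := by
    simp [hγ, h0 q₀]
  have hfin := eq_of_has_deriv_right_eq hder hlin
      ((hw.continuous.comp hγc).continuousOn)
      ((continuous_const.add (continuous_id.mul continuous_const)).continuousOn) h00 t
      ⟨ht.1, le_refl t⟩
  simpa [hγ, hc] using hfin

lemma clarke_of_C2 {d : ℕ} (f : Ed d → ℝ) (hf : ContDiff ℝ 2 f) (q : Ed d)
    {p : Ed d} (hp : p ∈ clarke f q) : p = gradient f q := by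
  have hgc : Continuous (gradient f) := by
    have : Continuous (fderiv ℝ f) := (hf.fderiv_right (m := 1) (by norm_num)).continuous
    exact (dI d).continuous.comp this
  have hsub : {p : Ed d | ∃ qn : ℕ → Ed d,
      (∀ n, DifferentiableAt ℝ f (qn n)) ∧
      Filter.Tendsto qn Filter.atTop (nhds q) ∧
      Filter.Tendsto (fun n => gradient f (qn n)) Filter.atTop (nhds p)}
      ⊆ {gradient f q} := by
    rintro p' ⟨qn, _, hq, hg⟩
    have h2 : Filter.Tendsto (fun n => gradient f (qn n)) Filter.atTop (nhds (gradient f q)) :=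
      (hgc.tendsto q).comp hq
    exact tendsto_nhds_unique hg h2
  have := convexHull_mono hsub (𝕜 := ℝ)
  rw [convexHull_singleton] at this
  exact this hp

lemma min_lipschitz {d : ℕ} (F : Set (Ed d → ℝ)) (K : NNReal)
    (hFlip : ∀ f ∈ F, LipschitzWith K f) (u : Ed d → ℝ)
    (humin : ∀ q : Ed d, ∀ f ∈ F, u q ≤ f q)
    (huatt : ∀ q : Ed d, ∃ f ∈ F, f q = u q) :
    LipschitzWith K u := by
  apply LipschitzWith.of_dist_le_mul
  intro x y
  rw [Real.dist_eq, abs_sub_le_iff]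
  constructor
  · obtain ⟨f, hf, hfy⟩ := huatt y
    have h1 : u x ≤ f x := humin x f hf
    have h2 : dist (f x) (f y) ≤ K * dist x y := (hFlip f hf).dist_le_mul x y
    have h3 : f x - f y ≤ K * dist x y := (abs_sub_le_iff.mp (Real.dist_eq _ _ ▸ h2)).1
    linarith [hfy ▸ h3]
  · obtain ⟨f, hf, hfx⟩ := huatt x
    have h1 : u y ≤ f y := humin y f hf
    have h2 : dist (f x) (f y) ≤ K * dist x y := (hFlip f hf).dist_le_mul x y
    have h3 : f y - f x ≤ K * dist x y := (abs_sub_le_iff.mp (Real.dist_eq _ _ ▸ h2)).2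
    linarith [hfx ▸ h3]

/-- If `u` is the minimum of a family `F` of `C²` equi-Lipschitz functions
with second derivatives bounded by `B` (every Clarke derivative of `u` being attained by the
derivative of a member of the family), and if `u_f` is the `C²` solution of the Cauchy
problem with initial condition `f` on `[0,T]`, `0 < T ≤ 1/(BC)`, then the variational
solution with initial condition `u` is `R^t u(q) = min_{f ∈ F} u_f(t,q)`. -/
theorem statement19 (d : ℕ) (H : Ed d → ℝ) (C : ℝ)
    (hH : ContDiff ℝ 2 H) (hC : ∀ p, ‖iteratedFDeriv ℝ 2 H p‖ ≤ C)
    (R : ℝ → (Ed d → ℝ) → Ed d → ℝ) (hR : IsVariationalOperator H R)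
    (F : Set (Ed d → ℝ)) (B : ℝ)
    (hFlip : ∃ K, ∀ f ∈ F, LipschitzWith K f)
    (hFC2 : ∀ f ∈ F, ContDiff ℝ 2 f)
    (hFB : ∀ f ∈ F, ∀ q, ‖iteratedFDeriv ℝ 2 f q‖ ≤ B)
    (u : Ed d → ℝ)
    (humin : ∀ q : Ed d, ∀ f ∈ F, u q ≤ f q)
    (huatt : ∀ q : Ed d, ∃ f ∈ F, f q = u q)
    (hclarke : ∀ q : Ed d, ∀ p ∈ clarke u q, ∃ f ∈ F, f q = u q ∧ gradient f q = p)
    (T : ℝ) (hT0 : 0 < T) (hT : T ≤ 1 / (B * C))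
    (uF : (Ed d → ℝ) → ℝ × Ed d → ℝ)
    (huFC2 : ∀ f ∈ F, ContDiff ℝ 2 (uF f))
    (huFpde : ∀ f ∈ F, ∀ x : ℝ × Ed d, x.1 ∈ Set.Icc 0 T →
      deriv (fun s => uF f (s, x.2)) x.1
        + H (gradient (fun q => uF f (x.1, q)) x.2) = 0)
    (huF0 : ∀ f ∈ F, ∀ q, uF f (0, q) = f q) :
    ∀ t : ℝ, 0 ≤ t → t ≤ T → ∀ q : Ed d,
      (∀ f ∈ F, R t u q ≤ uF f (t, q)) ∧ (∃ f ∈ F, uF f (t, q) = R t u q) := by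
  obtain ⟨hR1, hR2, hR3, hR4⟩ := hR
  obtain ⟨K, hK⟩ := hFlip
  have hulip : LipschitzWith K u := min_lipschitz F K hK u humin huatt
  intro t ht0 htT q
  constructor
  · intro f hf
    have hle : R t u q ≤ R t f q :=
      hR2 t ht0 u f ⟨K, hulip⟩ ⟨K, hK f hf⟩ (fun q' => humin q' f hf) q
    obtain ⟨q₀, p₀, hp₀, hqeq, hReq⟩ := hR4 t ht0 f ⟨K, hK f hf⟩ q
    have hpg : p₀ = gradient f q₀ := clarke_of_C2 f (hFC2 f hf) q₀ hp₀
    have hchar := char_lemma H hH T hT0.le f (uF f) (huFC2 f hf) (huFpde f hf)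
      (huF0 f hf) q₀ t ⟨ht0, htT⟩
    rw [← hpg] at hchar
    rw [← hqeq] at hchar
    calc R t u q ≤ R t f q := hle
      _ = uF f (t, q) := by rw [hReq, hchar]
  · obtain ⟨q₀, p₀, hp₀, hqeq, hReq⟩ := hR4 t ht0 u ⟨K, hulip⟩ q
    obtain ⟨f, hf, hfq, hgrad⟩ := hclarke q₀ p₀ hp₀
    refine ⟨f, hf, ?_⟩
    have hchar := char_lemma H hH T hT0.le f (uF f) (huFC2 f hf) (huFpde f hf)
      (huF0 f hf) q₀ t ⟨ht0, htT⟩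
    rw [hgrad] at hchar
    rw [← hqeq] at hchar
    rw [hchar, hReq, hfq]
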